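/- The greedy allocation B* is the unique maximizer: if x is a feasible allocation with Σ_i k_i·x_i = Σ_i k_i·B*_i, then x_i = B*_i for every i. -/

import Mathlib

open Finset in
/-- The greedy allocation B* is the unique maximizer: any
feasible allocation x attaining the same objective value Σ_i k_i x_i as B*
coincides with B*. -/
theorem greedy_allocation_unique_maximizer
    (T : ℕ) (hT : 1 ≤ T) (k C : Fin T → ℝ)
    (hk : StrictMono k) (hC : ∀ i, 0 ≤ C i)
    (B : ℝ) (hB0 : 0 ≤ B) (hBle : B ≤ ∑ i, C i)
    (Bstar : Fin T → ℝ)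
    (hBstar : ∀ i, Bstar i =
      min (C i) (max 0 (B - ∑ j ∈ univ.filter (fun j => i < j), C j))) :
    ∀ x : Fin T → ℝ, (∀ i, 0 ≤ x i ∧ x i ≤ C i) → (∑ i, x i = B) →
      (∑ i, k i * x i = ∑ i, k i * Bstar i) →
      ∀ i, x i = Bstar i := by
  intro x hx hsum hobj
  -- tail sums
  set t : (Fin T → ℝ) → ℕ → ℝ :=
    fun y n => ∑ j ∈ univ.filter (fun j : Fin T => n ≤ j.val), y j with ht
  have hins : ∀ (n : ℕ) (h : n < T) (y : Fin T → ℝ),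
      t y n = y ⟨n, h⟩ + t y (n+1) := by
    intro n h y
    have hset : univ.filter (fun j : Fin T => n ≤ j.val)
        = insert (⟨n, h⟩ : Fin T) (univ.filter (fun j : Fin T => n+1 ≤ j.val)) := by
      ext j
      simp only [mem_filter, mem_univ, true_and, mem_insert, Fin.ext_iff]
      omega
    have hnotmem : (⟨n, h⟩ : Fin T) ∉ univ.filter (fun j : Fin T => n+1 ≤ j.val) := by
      simp
    simp only [ht, hset, sum_insert hnotmem]
  have hempty : ∀ (y : Fin T → ℝ) (n : ℕ), T ≤ n → t y n = 0 := by
    intro y n hn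
    apply Finset.sum_eq_zero
    intro j hj
    simp only [mem_filter, mem_univ, true_and] at hj
    exact absurd j.isLt (by omega)
  have hfull : ∀ (y : Fin T → ℝ), t y 0 = ∑ i, y i := by
    intro y
    simp [ht]
  -- bounds for x
  have htxB : ∀ n, t x n ≤ B := by
    intro n
    have hsplit := Finset.sum_filter_add_sum_filter_not univ
      (fun j : Fin T => n ≤ j.val) x
    have hnn : 0 ≤ ∑ j ∈ univ.filter (fun j : Fin T => ¬ n ≤ j.val), x j :=
      Finset.sum_nonneg fun j _ => (hx j).1
    simp only [ht]
    rw [hsum] at hsplit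
    linarith
  have htxC : ∀ n, t x n ≤ t C n := by
    intro n
    exact Finset.sum_le_sum fun j _ => (hx j).2
  have htx0 : ∀ n, 0 ≤ t x n := by
    intro n
    exact Finset.sum_nonneg fun j _ => (hx j).1
  have htC0 : ∀ n, 0 ≤ t C n := fun n => Finset.sum_nonneg fun j _ => hC j
  -- tail of Bstar
  have hBtail : ∀ n, n ≤ T → t Bstar n = min B (t C n) := by
    suffices h : ∀ m, t Bstar (T - m) = min B (t C (T - m)) by
      intro n hn
      have := h (T - n)
      rwa [Nat.sub_sub_self hn] at this
    intro m
    induction m with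
    | zero =>
        simp only [Nat.sub_zero]
        rw [hempty _ _ le_rfl, hempty _ _ le_rfl, min_eq_right hB0]
    | succ m ih =>
        by_cases hm : T ≤ m
        · have : T - (m+1) = T - m := by omega
          rw [this]; exact ih
        · push_neg at hm
          set n := T - (m+1) with hn
          have hnT : n < T := by omega
          have hsucc : n + 1 = T - m := by omega
          rw [← hsucc] at ih
          rw [hins n hnT Bstar, hBstar ⟨n, hnT⟩]
          have hfilter : univ.filter (fun j : Fin T => (⟨n, hnT⟩ : Fin T) < j)
              = univ.filter (fun j : Fin T => n+1 ≤ j.val) := by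
            ext j
            simp only [mem_filter, mem_univ, true_and, Fin.lt_def]
            omega
          rw [hfilter, ih]
          have hCstep : t C n = C ⟨n, hnT⟩ + t C (n+1) := hins n hnT C
          rcases le_total B (t C (n+1)) with h | h
          · rw [max_eq_left (by linarith), min_eq_right (hC _), min_eq_left h,
              min_eq_left (by rw [hCstep]; have := hC (⟨n, hnT⟩ : Fin T); linarith)]
            ring
          · rw [max_eq_right (by linarith), min_eq_right h, hCstep]
            rw [min_comm B (C ⟨n, hnT⟩ + t C (n+1)), ← min_add_add_right]
            rw [show (∑ j ∈ univ.filter (fun j : Fin T => n+1 ≤ j.val), C j) = t C (n+1) from rfl]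
            ring_nf
  -- extended k
  have hT1 : T - 1 < T := by omega
  set k' : ℕ → ℝ := fun n => k ⟨min n (T-1), by omega⟩ with hk'def
  have hk' : ∀ (n : ℕ) (h : n < T), k' n = k ⟨n, h⟩ := by
    intro n h
    have : min n (T-1) = n := by omega
    simp only [hk'def, this]
  -- objective in terms of tail sums
  have hobj' : ∀ y : Fin T → ℝ,
      ∑ i, k i * y i = ∑ i ∈ Finset.range T, k' i * (t y i - t y (i+1)) := by
    intro y
    rw [← Fin.sum_univ_eq_sum_range (fun n => k' n * (t y n - t y (n+1))) T]
    apply Finset.sum_congr rfl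
    intro i _
    rw [hk' i.val i.isLt, hins i.val i.isLt y]
    simp [Fin.eta]
  -- difference D
  set D : ℕ → ℝ := fun n => t Bstar n - t x n with hD
  have hDnn : ∀ n, n ≤ T → 0 ≤ D n := by
    intro n hn
    have := hBtail n hn
    simp only [hD, this]
    have h1 := htxB n
    have h2 := htxC n
    exact sub_nonneg.2 (le_min h1 h2)
  have hD0 : D 0 = 0 := by
    have h1 : t x 0 = B := by rw [hfull]; exact hsum
    have h2 : t Bstar 0 = B := by
      rw [hBtail 0 (by omega), min_eq_left]
      rw [hfull]; exact hBle
    simp [hD, h1, h2]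
  have hDT : D T = 0 := by
    simp [hD, hempty _ _ le_rfl]
  -- difference of objectives
  have key : ∑ i ∈ Finset.range T, k' i * (D i - D (i+1)) = 0 := by
    have h1 : ∑ i ∈ Finset.range T, k' i * (D i - D (i+1))
        = (∑ i ∈ Finset.range T, k' i * (t Bstar i - t Bstar (i+1)))
          - ∑ i ∈ Finset.range T, k' i * (t x i - t x (i+1)) := by
      rw [← Finset.sum_sub_distrib]
      apply Finset.sum_congr rfl
      intro i _
      simp only [hD]; ring
    rw [h1, ← hobj' x, ← hobj' Bstar, hobj]
    ring
  obtain ⟨m, hTm⟩ : ∃ m, T = m + 1 := ⟨T - 1, by omega⟩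
  have key2 : ∑ i ∈ Finset.range m, (k' (i+1) - k' i) * D (i+1) = 0 := by
    have e1 : ∑ i ∈ Finset.range T, k' i * (D i - D (i+1))
        = (∑ i ∈ Finset.range T, k' i * D i)
          - ∑ i ∈ Finset.range T, k' i * D (i+1) := by
      rw [← Finset.sum_sub_distrib]
      apply Finset.sum_congr rfl
      intro i _; ring
    have e2 : ∑ i ∈ Finset.range T, k' i * D i
        = ∑ i ∈ Finset.range m, k' (i+1) * D (i+1) := by
      rw [hTm, Finset.sum_range_succ' (fun i => k' i * D i) m, hD0]
      ring
    have e3 : ∑ i ∈ Finset.range T, k' i * D (i+1)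
        = ∑ i ∈ Finset.range m, k' i * D (i+1) := by
      rw [hTm, Finset.sum_range_succ]
      rw [← hTm, hDT]
      ring
    rw [e1, e2, e3] at key
    rw [← key, ← Finset.sum_sub_distrib]
    apply Finset.sum_congr rfl
    intro i _; ring
  have hDmid : ∀ i, i < m → D (i+1) = 0 := by
    intro i hi
    have hnn : ∀ j ∈ Finset.range m, 0 ≤ (k' (j+1) - k' j) * D (j+1) := by
      intro j hj
      simp only [Finset.mem_range] at hj
      have hj1 : j + 1 < T := by omega
      have hjT : j < T := by omega
      have hkpos : k' j < k' (j+1) := by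
        rw [hk' j hjT, hk' (j+1) hj1]
        exact hk (by simp [Fin.lt_def])
      exact mul_nonneg (by linarith) (hDnn (j+1) (by omega))
    have := (Finset.sum_eq_zero_iff_of_nonneg hnn).1 key2 i (Finset.mem_range.2 hi)
    have hj1 : i + 1 < T := by omega
    have hjT : i < T := by omega
    have hkpos : k' i < k' (i+1) := by
      rw [hk' i hjT, hk' (i+1) hj1]
      exact hk (by simp [Fin.lt_def])
    rcases mul_eq_zero.1 this with h | h
    · linarith
    · exact h
  have hDall : ∀ n, n ≤ T → D n = 0 := by
    intro n hn
    match n with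
    | 0 => exact hD0
    | (j+1) =>
        by_cases hj : j < m
        · exact hDmid j hj
        · have : j + 1 = T := by omega
          rw [this]; exact hDT
  -- conclude
  intro i
  have h1 := hins i.val i.isLt x
  have h2 := hins i.val i.isLt Bstar
  have d1 : D i.val = 0 := hDall i.val (le_of_lt i.isLt)
  have d2 : D (i.val + 1) = 0 := hDall (i.val + 1) i.isLt
  simp only [hD] at d1 d2
  have : x ⟨i.val, i.isLt⟩ = Bstar ⟨i.val, i.isLt⟩ := by linarith
  simpa [Fin.eta] using this
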